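/- arXiv:2602.09594 — 5 statements merged into one kernel-verified Lean document; each statement's English description precedes it below -/
import Mathlib

section
/- The set Θ ⊆ ℂ × ℂ consisting of all pairs (γ₋, γ₊) for which there exist q, b ∈ ℂ with cos(πq/2 − b) ≠ 0 and cos(πq/2 + b) ≠ 0 satisfying the three equations sin(πq)·cos(2b) = −πq, πq·tan(πq/2 − b) = i·γ₋, and πq·tan(πq/2 + b) = i·γ₊, has Lebesgue measure zero in ℂ × ℂ ≅ ℝ⁴. -/
open Complex MeasureTheory

/-- The exceptional set of admittance parameter pairs `(γ₋, γ₊)` on which the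
rectangular-room eigenfunction basis may fail to be complete. -/
def Theta : Set (ℂ × ℂ) :=
  {p : ℂ × ℂ | ∃ q b : ℂ,
    Complex.cos (↑Real.pi * q / 2 - b) ≠ 0 ∧
    Complex.cos (↑Real.pi * q / 2 + b) ≠ 0 ∧
    Complex.sin (↑Real.pi * q) * Complex.cos (2 * b) = -(↑Real.pi * q) ∧
    ↑Real.pi * q * Complex.tan (↑Real.pi * q / 2 - b) = Complex.I * p.1 ∧
    ↑Real.pi * q * Complex.tan (↑Real.pi * q / 2 + b) = Complex.I * p.2}

/-- The zero set of an entire function that is not identically zero is countable. -/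
lemma countable_zeros {g : ℂ → ℂ} (hg : ∀ z, AnalyticAt ℂ g z) {z₀ : ℂ} (h0 : g z₀ ≠ 0) :
    {z : ℂ | g z = 0}.Countable := by
  set Z := {z : ℂ | g z = 0} with hZ
  have hdisc : DiscreteTopology Z := by
    rw [discreteTopology_subtype_iff]
    intro x hx
    rcases (hg x).eventually_eq_zero_or_eventually_ne_zero with h | h
    · exfalso
      have hfreq : ∃ᶠ z in nhdsWithin x {x}ᶜ, g z = 0 :=
        ((h.filter_mono nhdsWithin_le_nhds).frequently)
      have : Set.EqOn g 0 Set.univ :=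
        AnalyticOnNhd.eqOn_zero_of_preconnected_of_frequently_eq_zero
          (fun z _ => hg z) isPreconnected_univ (Set.mem_univ x) hfreq
      exact h0 (this (Set.mem_univ z₀))
    · rw [Filter.inf_principal_eq_bot]
      exact h.mono fun z hz hzZ => hz hzZ
  exact (HereditarilyLindelof_LindelofSets Z).countable hdisc

/-- The zero set of the constraint equation has measure zero in `ℂ × ℂ`. -/
lemma constraint_measure_zero :
    volume {p : ℂ × ℂ | Complex.sin (↑Real.pi * p.1) * Complex.cos (2 * p.2)
      + ↑Real.pi * p.1 = 0} = 0 := by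
  set S := {p : ℂ × ℂ | Complex.sin (↑Real.pi * p.1) * Complex.cos (2 * p.2)
      + ↑Real.pi * p.1 = 0} with hS
  have hmeas : MeasurableSet S := by
    have : IsClosed S := by
      have hc : Continuous fun p : ℂ × ℂ =>
          Complex.sin (↑Real.pi * p.1) * Complex.cos (2 * p.2) + ↑Real.pi * p.1 := by
        fun_prop
      exact isClosed_eq hc continuous_const
    exact this.measurableSet
  rw [Measure.volume_eq_prod ℂ ℂ, MeasureTheory.Measure.measure_prod_null hmeas]
  filter_upwards [Set.Countable.ae_notMem (Set.countable_singleton (0:ℂ)) volume] with q hq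
  have hq0 : q ≠ 0 := by simpa using hq
  have : {b : ℂ | (q, b) ∈ S}.Countable := by
    have hg : ∀ z, AnalyticAt ℂ (fun b : ℂ =>
        Complex.sin (↑Real.pi * q) * Complex.cos (2 * b) + ↑Real.pi * q) z := by
      intro z
      rw [analyticAt_iff_eventually_differentiableAt]
      filter_upwards with w
      fun_prop
    rcases eq_or_ne (Complex.sin (↑Real.pi * q)) 0 with hs | hs
    · -- the function is the nonzero constant π q
      have h0 : Complex.sin (↑Real.pi * q) * Complex.cos (2 * (0:ℂ)) + ↑Real.pi * q ≠ 0 := by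
        rw [hs]
        simp only [zero_mul, zero_add]
        exact mul_ne_zero (by exact_mod_cast Real.pi_ne_zero) hq0
      have := countable_zeros hg h0
      apply this.mono
      intro b hb
      simpa [hS] using hb
    · -- evaluate at b = 0 and b = π/2 : can't both vanish
      by_cases h0 : Complex.sin (↑Real.pi * q) * Complex.cos (2 * (0:ℂ)) + ↑Real.pi * q ≠ 0
      · exact (countable_zeros hg h0).mono fun b hb => by simpa [hS] using hb
      · push_neg at h0
        have h1 : Complex.sin (↑Real.pi * q) * Complex.cos (2 * ((↑Real.pi)/2 : ℂ))
            + ↑Real.pi * q ≠ 0 := by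
          simp only [mul_zero, Complex.cos_zero, mul_one] at h0
          rw [show (2 : ℂ) * ((↑Real.pi)/2) = (↑Real.pi : ℂ) by ring]
          rw [Complex.cos_pi]
          intro h
          have : (2 : ℂ) * Complex.sin (↑Real.pi * q) = 0 := by linear_combination h0 - h
          rcases mul_eq_zero.mp this with h2 | h2
          · norm_num at h2
          · exact hs h2
        exact (countable_zeros hg h1).mono fun b hb => by simpa [hS] using hb
  exact this.measure_zero _

theorem theta_measure_zero : volume Theta = 0 := by
  classical
  set S := {p : ℂ × ℂ | Complex.sin (↑Real.pi * p.1) * Complex.cos (2 * p.2)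
      + ↑Real.pi * p.1 = 0} with hS
  set U := {p : ℂ × ℂ | Complex.cos (↑Real.pi * p.1 / 2 - p.2) ≠ 0 ∧
      Complex.cos (↑Real.pi * p.1 / 2 + p.2) ≠ 0} with hU
  set φ : ℂ × ℂ → ℂ × ℂ := fun p =>
    (-(Complex.I) * (↑Real.pi * p.1 * Complex.tan (↑Real.pi * p.1 / 2 - p.2)),
     -(Complex.I) * (↑Real.pi * p.1 * Complex.tan (↑Real.pi * p.1 / 2 + p.2))) with hφ
  have hsub : Theta ⊆ φ '' (S ∩ U) := by
    rintro p ⟨q, b, h1, h2, h3, h4, h5⟩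
    refine ⟨(q, b), ⟨?_, h1, h2⟩, ?_⟩
    · simp only [hS, Set.mem_setOf_eq]
      linear_combination h3
    · simp only [hφ]
      have e1 : p.1 = -(Complex.I) * (↑Real.pi * q * Complex.tan (↑Real.pi * q / 2 - b)) := by
        rw [h4]; ring_nf; simp [Complex.I_sq]
      have e2 : p.2 = -(Complex.I) * (↑Real.pi * q * Complex.tan (↑Real.pi * q / 2 + b)) := by
        rw [h5]; ring_nf; simp [Complex.I_sq]
      exact Prod.ext e1.symm e2.symm
  have hdiff : DifferentiableOn ℝ φ (S ∩ U) := by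
    have hdiffC : DifferentiableOn ℂ φ U := by
      intro p hp
      obtain ⟨hp1, hp2⟩ := hp
      have ht1 : DifferentiableAt ℂ (fun p : ℂ × ℂ =>
          Complex.tan (↑Real.pi * p.1 / 2 - p.2)) p := by
        have := Complex.differentiableAt_tan.2 hp1
        have hf : DifferentiableAt ℂ (fun p : ℂ × ℂ => ↑Real.pi * p.1 / 2 - p.2) p := by fun_prop
        exact this.comp p hf
      have ht2 : DifferentiableAt ℂ (fun p : ℂ × ℂ =>
          Complex.tan (↑Real.pi * p.1 / 2 + p.2)) p := by
        have := Complex.differentiableAt_tan.2 hp2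
        have hf : DifferentiableAt ℂ (fun p : ℂ × ℂ => ↑Real.pi * p.1 / 2 + p.2) p := by fun_prop
        exact this.comp p hf
      apply DifferentiableAt.differentiableWithinAt
      apply DifferentiableAt.prodMk
      · exact (differentiableAt_const _).mul ((by fun_prop : DifferentiableAt ℂ
          (fun p : ℂ × ℂ => ↑Real.pi * p.1) p).mul ht1)
      · exact (differentiableAt_const _).mul ((by fun_prop : DifferentiableAt ℂ
          (fun p : ℂ × ℂ => ↑Real.pi * p.1) p).mul ht2)
    exact ((hdiffC.mono (Set.inter_subset_right)).restrictScalars ℝ)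
  have hnull : volume (S ∩ U) = 0 :=
    le_antisymm (le_trans (measure_mono Set.inter_subset_left)
      constraint_measure_zero.le) (zero_le)
  haveI : (volume : Measure (ℂ × ℂ)).IsAddHaarMeasure :=
    MeasureTheory.Measure.prod.instIsAddHaarMeasure _ _
  have himg : volume (φ '' (S ∩ U)) = 0 :=
    MeasureTheory.addHaar_image_eq_zero_of_differentiableOn_of_addHaar_eq_zero
      volume hdiff hnull
  exact le_antisymm (le_trans (measure_mono hsub) himg.le) (zero_le)
end

section
/- For any fixed γ₋, γ₊ ∈ ℂ there exists m₀ ∈ ℕ such that for every natural number m ≥ m₀ and every q ∈ ℂ with |q| = m + 1/2, one has |(γ₋ + γ₊)·(πq)·cos(πq)| < |((πq)² + γ₋γ₊)·sin(πq)|. -/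
set_option maxHeartbeats 1000000

open Real Complex

lemma abs_sin_sq_eq (z : ℂ) :
    ‖Complex.sin z‖ ^ 2 = Real.sin z.re ^ 2 + Real.sinh z.im ^ 2 := by
  rw [Complex.sq_norm, Complex.sin_eq]
  rw [show Complex.sin ↑z.re * Complex.cosh ↑z.im + Complex.cos ↑z.re * Complex.sinh ↑z.im * I
      = ↑(Real.sin z.re * Real.cosh z.im) + ↑(Real.cos z.re * Real.sinh z.im) * I by
    push_cast; ring]
  rw [Complex.normSq_add_mul_I]
  have h1 : Real.cosh z.im ^ 2 = Real.sinh z.im ^ 2 + 1 := Real.cosh_sq _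
  have h2 : Real.sin z.re ^ 2 + Real.cos z.re ^ 2 = 1 := Real.sin_sq_add_cos_sq _
  nlinarith [h1, h2]

lemma abs_cos_sq_eq (z : ℂ) :
    ‖Complex.cos z‖ ^ 2 = Real.cos z.re ^ 2 + Real.sinh z.im ^ 2 := by
  rw [Complex.sq_norm, Complex.cos_eq]
  rw [show Complex.cos ↑z.re * Complex.cosh ↑z.im - Complex.sin ↑z.re * Complex.sinh ↑z.im * I
      = ↑(Real.cos z.re * Real.cosh z.im) + ↑(-(Real.sin z.re * Real.sinh z.im)) * I by
    push_cast; ring]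
  rw [Complex.normSq_add_mul_I]
  have h1 : Real.cosh z.im ^ 2 = Real.sinh z.im ^ 2 + 1 := Real.cosh_sq _
  have h2 : Real.sin z.re ^ 2 + Real.cos z.re ^ 2 = 1 := Real.sin_sq_add_cos_sq _
  nlinarith [h1, h2]

lemma key_sin_lower (m : ℕ) (q : ℂ) (hq : ‖q‖ = (m : ℝ) + 1 / 2) :
    (1 : ℝ) / 10 * (1 + ‖Complex.cos (↑Real.pi * q)‖)
      ≤ ‖Complex.sin (↑Real.pi * q)‖ := by
  set z : ℂ := ↑Real.pi * q with hz
  set x : ℝ := z.re with hxdef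
  set y : ℝ := z.im with hydef
  set R : ℝ := Real.pi * ((m : ℝ) + 1 / 2) with hR
  have hpi : (3 : ℝ) < Real.pi := Real.pi_gt_three
  have hm0 : (0 : ℝ) ≤ (m : ℝ) := Nat.cast_nonneg m
  have hR1 : (1 : ℝ) ≤ R := by rw [hR]; nlinarith
  have habs : ‖z‖ = R := by
    rw [hz, norm_mul, Complex.norm_real, Real.norm_eq_abs, abs_of_pos Real.pi_pos, hq]
  have hxy : x ^ 2 + y ^ 2 = R ^ 2 := by
    have h := Complex.sq_norm z
    rw [habs, Complex.normSq_apply] at h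
    rw [← hxdef, ← hydef] at h
    nlinarith [h]
  have hs : ‖Complex.sin z‖ ^ 2 = Real.sin x ^ 2 + Real.sinh y ^ 2 :=
    abs_sin_sq_eq z
  have hc : ‖Complex.cos z‖ ^ 2 = Real.cos x ^ 2 + Real.sinh y ^ 2 :=
    abs_cos_sq_eq z
  have hmain : Real.sin x ^ 2 + Real.sinh y ^ 2 ≥ 1 / 4 ∧
      Real.sin x ^ 2 + Real.sinh y ^ 2 ≥
        (1 / 25) * (Real.cos x ^ 2 + Real.sinh y ^ 2) := by
    rcases le_or_gt 1 |y| with hy | hy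
    · have h1 : |y| < Real.sinh |y| := Real.self_lt_sinh_iff.mpr (by linarith)
      have h2 : Real.sinh y ^ 2 = Real.sinh |y| ^ 2 := by
        rcases abs_cases y with ⟨h, _⟩ | ⟨h, _⟩ <;> rw [h] <;> simp [Real.sinh_neg]
      have h3 : (1 : ℝ) ≤ Real.sinh y ^ 2 := by rw [h2]; nlinarith
      constructor
      · nlinarith [sq_nonneg (Real.sin x)]
      · nlinarith [sq_nonneg (Real.sin x), Real.cos_sq_le_one x]
    · have hy2 : y ^ 2 < 1 := by
        rw [← _root_.sq_abs y]; nlinarith [abs_nonneg y]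
      have hx2 : R ^ 2 - 1 < x ^ 2 := by nlinarith
      have hxle : |x| ≤ R := by
        apply le_of_pow_le_pow_left₀ two_ne_zero (by linarith : (0:ℝ) ≤ R)
        rw [_root_.sq_abs]; nlinarith [sq_nonneg y]
      have hxge : R - 1 ≤ |x| := by
        apply le_of_pow_le_pow_left₀ two_ne_zero (abs_nonneg x)
        rw [_root_.sq_abs]; nlinarith
      set t : ℝ := R - |x| with ht
      have ht0 : 0 ≤ t := by simp only [ht]; linarith
      have ht1 : t ≤ 1 := by simp only [ht]; linarith
      have hxval : |x| = (m : ℝ) * Real.pi + (Real.pi / 2 - t) := by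
        rw [ht, hR]; ring
      have hsinabs : Real.sin |x| = Real.cos ((m : ℝ) * Real.pi) * Real.cos t := by
        rw [hxval, Real.sin_add, Real.sin_nat_mul_pi, Real.sin_pi_div_two_sub]
        ring
      have hcossq : Real.cos ((m : ℝ) * Real.pi) ^ 2 = 1 := by
        have h := Real.sin_sq_add_cos_sq ((m : ℝ) * Real.pi)
        rw [Real.sin_nat_mul_pi] at h
        nlinarith [h]
      have hcost : (1 : ℝ) / 2 ≤ Real.cos t := by
        have := Real.one_sub_sq_div_two_le_cos (x := t)
        nlinarith
      have hsinsq : Real.sin x ^ 2 = Real.cos t ^ 2 := by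
        have hsx : Real.sin x ^ 2 = Real.sin |x| ^ 2 := by
          rcases abs_cases x with ⟨h, _⟩ | ⟨h, _⟩ <;> rw [h] <;> simp [Real.sin_neg]
        rw [hsx, hsinabs, mul_pow, hcossq, one_mul]
      have h14 : (1 : ℝ) / 4 ≤ Real.sin x ^ 2 := by rw [hsinsq]; nlinarith
      constructor
      · nlinarith [sq_nonneg (Real.sinh y)]
      · nlinarith [sq_nonneg (Real.sinh y), Real.cos_sq_le_one x]
  obtain ⟨h1, h2⟩ := hmain
  have hsn : (0 : ℝ) ≤ ‖Complex.sin z‖ := norm_nonneg _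
  have hcn : (0 : ℝ) ≤ ‖Complex.cos z‖ := norm_nonneg _
  have hb1 : (1 : ℝ) / 2 ≤ ‖Complex.sin z‖ := by
    apply le_of_pow_le_pow_left₀ two_ne_zero hsn
    rw [hs]; nlinarith
  have hb2 : (1 : ℝ) / 5 * ‖Complex.cos z‖ ≤ ‖Complex.sin z‖ := by
    apply le_of_pow_le_pow_left₀ two_ne_zero hsn
    rw [mul_pow, hs]; nlinarith [hc]
  linarith

/-- Rouché domination hypothesis: for all sufficiently large `m`, on the circle
`|q| = m + 1/2` the term `(γ₋ + γ₊)·(πq)·cos(πq)` is strictly dominated by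
`((πq)² + γ₋γ₊)·sin(πq)`. -/
theorem rouche_domination (γm γp : ℂ) :
    ∃ m₀ : ℕ, ∀ m : ℕ, m₀ ≤ m → ∀ q : ℂ, ‖q‖ = (m : ℝ) + 1 / 2 →
      ‖(γm + γp) * (↑Real.pi * q) * Complex.cos (↑Real.pi * q)‖ <
        ‖((↑Real.pi * q) ^ 2 + γm * γp) * Complex.sin (↑Real.pi * q)‖ := by
  set A : ℝ := ‖γm * γp‖ with hA
  set B : ℝ := ‖γm + γp‖ with hB
  refine ⟨⌈10 * B + A + 1⌉₊, fun m hm q hq => ?_⟩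
  have hA0 : 0 ≤ A := norm_nonneg _
  have hB0 : 0 ≤ B := norm_nonneg _
  have hmB : 10 * B + A + 1 ≤ (m : ℝ) := by
    have h1 : (10 * B + A + 1 : ℝ) ≤ (⌈10 * B + A + 1⌉₊ : ℝ) := Nat.le_ceil _
    have h2 : ((⌈10 * B + A + 1⌉₊ : ℕ) : ℝ) ≤ (m : ℝ) := by exact_mod_cast hm
    linarith
  set z : ℂ := ↑Real.pi * q with hz
  set R : ℝ := Real.pi * ((m : ℝ) + 1 / 2) with hR
  have hpi : (3 : ℝ) < Real.pi := Real.pi_gt_three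
  have habs : ‖z‖ = R := by
    rw [hz, norm_mul, Complex.norm_real, Real.norm_eq_abs, abs_of_pos Real.pi_pos, hq]
  have hRm : 3 * (m : ℝ) ≤ R := by rw [hR]; nlinarith [(Nat.cast_nonneg m : (0:ℝ) ≤ (m:ℝ))]
  have hR1 : (1 : ℝ) ≤ R := by nlinarith
  have hRsq : 10 * B * R + A < R ^ 2 := by nlinarith
  have hkey : (1 : ℝ) / 10 * (1 + ‖Complex.cos z‖) ≤
      ‖Complex.sin z‖ := key_sin_lower m q hq
  have hz2 : R ^ 2 - A ≤ ‖z ^ 2 + γm * γp‖ := by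
    have h := norm_add_le (z ^ 2 + γm * γp) (-(γm * γp))
    simp only [add_neg_cancel_right, norm_neg] at h
    rw [norm_pow, habs] at h
    rw [← hA] at h
    linarith [h]
  have hcn : (0 : ℝ) ≤ ‖Complex.cos z‖ := norm_nonneg _
  have hsn : (0 : ℝ) ≤ ‖Complex.sin z‖ := norm_nonneg _
  have hLeq : ‖(γm + γp) * z * Complex.cos z‖
      = B * R * ‖Complex.cos z‖ := by
    rw [norm_mul, norm_mul, habs, ← hB]
  have hReq : ‖(z ^ 2 + γm * γp) * Complex.sin z‖
      = ‖z ^ 2 + γm * γp‖ * ‖Complex.sin z‖ := norm_mul _ _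
  rw [hLeq, hReq]
  calc B * R * ‖Complex.cos z‖
      ≤ B * R * (1 + ‖Complex.cos z‖) := by nlinarith
    _ < (R ^ 2 - A) * (1 / 10 * (1 + ‖Complex.cos z‖)) := by nlinarith
    _ ≤ (R ^ 2 - A) * ‖Complex.sin z‖ :=
        mul_le_mul_of_nonneg_left hkey (by nlinarith)
    _ ≤ ‖z ^ 2 + γm * γp‖ * ‖Complex.sin z‖ :=
        mul_le_mul_of_nonneg_right hz2 hsn
end

section
/- For every natural number m and every z ∈ ℂ with |z| = m + 1/2, one has |cos(πz)| ≤ 2·|sin(πz)| (equivalently, |cot(πz)| ≤ 2, noting that sin(πz) ≠ 0 on such circles). -/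
open Real

lemma normSq_sin_aux (w : ℂ) :
    Complex.normSq (Complex.sin w) = Real.sin w.re ^ 2 + Real.sinh w.im ^ 2 := by
  rw [Complex.sin_eq, ← Complex.ofReal_sin, ← Complex.ofReal_cos, ← Complex.ofReal_sinh,
    ← Complex.ofReal_cosh, ← Complex.ofReal_mul, ← Complex.ofReal_mul,
    Complex.normSq_add_mul_I]
  nlinarith [Real.cosh_sq w.im, Real.sin_sq_add_cos_sq w.re]

lemma normSq_cos_aux (w : ℂ) :
    Complex.normSq (Complex.cos w) = Real.cos w.re ^ 2 + Real.sinh w.im ^ 2 := by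
  rw [Complex.cos_eq, sub_eq_add_neg, ← neg_mul, ← Complex.ofReal_sin, ← Complex.ofReal_cos,
    ← Complex.ofReal_sinh, ← Complex.ofReal_cosh, ← Complex.ofReal_mul, ← Complex.ofReal_mul,
    ← Complex.ofReal_neg, Complex.normSq_add_mul_I]
  nlinarith [Real.cosh_sq w.im, Real.sin_sq_add_cos_sq w.re]

lemma key_ineq (m : ℕ) (x y : ℝ) (h : x ^ 2 + y ^ 2 = ((m : ℝ) + 1 / 2) ^ 2) :
    1 ≤ 5 * Real.sin (π * x) ^ 2 + 3 * Real.sinh (π * y) ^ 2 := by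
  have hpi3 : (3 : ℝ) < π := Real.pi_gt_three
  by_cases hy : 1 / 4 ≤ |y|
  · -- sinh part dominates
    have h1 : Real.sinh (π * y) ^ 2 = Real.sinh (π * |y|) ^ 2 := by
      rcases abs_cases y with ⟨h, _⟩ | ⟨h, _⟩
      · rw [h]
      · rw [h, mul_neg, Real.sinh_neg, neg_sq]
    have h2 : π * |y| ≤ Real.sinh (π * |y|) := by
      rw [Real.self_le_sinh_iff]; positivity
    have h3 : (3 : ℝ) / 4 ≤ π * |y| := by nlinarith [abs_nonneg y]
    nlinarith [sq_nonneg (Real.sin (π * x))]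
  · push_neg at hy
    set t := |x| with ht
    have ht0 : 0 ≤ t := abs_nonneg x
    have htsq : t ^ 2 = x ^ 2 := sq_abs x
    have hx2 : (m : ℝ) ^ 2 + m + 3 / 16 ≤ t ^ 2 := by
      nlinarith [sq_abs y, sq_nonneg y, abs_nonneg y]
    have hm0 : (0 : ℝ) ≤ m := Nat.cast_nonneg m
    have hlb : (m : ℝ) + 9 / 40 ≤ t := by
      nlinarith [sq_nonneg (t - ((m : ℝ) + 9 / 40)), sq_nonneg (t + ((m : ℝ) + 9 / 40))]
    have hub : t ≤ (m : ℝ) + 1 / 2 := by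
      nlinarith [sq_nonneg (t - ((m : ℝ) + 1 / 2)), sq_nonneg (t + ((m : ℝ) + 1 / 2))]
    set d := t - m with hd
    have hd1 : 9 / 40 ≤ d := by simp [hd]; linarith
    have hd2 : d ≤ 1 / 2 := by simp [hd]; linarith
    -- sin(πx)^2 = sin(πd)^2
    have hs1 : Real.sin (π * x) ^ 2 = Real.sin (π * t) ^ 2 := by
      rcases abs_cases x with ⟨h, _⟩ | ⟨h, _⟩
      · rw [ht, h]
      · rw [ht, h, mul_neg, Real.sin_neg, neg_sq]
    have hs2 : Real.sin (π * t) ^ 2 = Real.sin (π * d) ^ 2 := by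
      rw [Real.sin_sq_eq_half_sub, Real.sin_sq_eq_half_sub]
      have : 2 * (π * t) = 2 * (π * d) + m * (2 * π) := by simp only [hd]; ring
      rw [this, Real.cos_add_nat_mul_two_pi]
    have hsin : 2 / π * (π * d) ≤ Real.sin (π * d) := by
      apply Real.mul_le_sin
      · positivity
      · nlinarith
    have hsin' : 2 * d ≤ Real.sin (π * d) := by
      have hπ : π ≠ 0 := by positivity
      calc 2 * d = 2 / π * (π * d) := by field_simp
        _ ≤ _ := hsin
    rw [hs1, hs2]
    nlinarith [sq_nonneg (Real.sinh (π * y))]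

/-- On every circle `|z| = m + 1/2` with `m ∈ ℕ`, one has `|cos(πz)| ≤ 2·|sin(πz)|`. -/
theorem cot_bound_on_half_integer_circles (m : ℕ) (z : ℂ)
    (hz : ‖z‖ = (m : ℝ) + 1 / 2) :
    ‖Complex.cos (↑Real.pi * z)‖ ≤
      2 * ‖Complex.sin (↑Real.pi * z)‖ := by
  rw [← pow_le_pow_iff_left₀ (by positivity) (by positivity) two_ne_zero, mul_pow,
    Complex.sq_norm, Complex.sq_norm, normSq_cos_aux, normSq_sin_aux]
  have hre : (↑Real.pi * z).re = π * z.re := by simp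
  have him : (↑Real.pi * z).im = π * z.im := by simp
  rw [hre, him]
  have hsq : z.re ^ 2 + z.im ^ 2 = ((m : ℝ) + 1 / 2) ^ 2 := by
    have := Complex.sq_norm z
    rw [hz] at this
    rw [this, Complex.normSq_apply]; ring
  have key := key_ineq m z.re z.im hsq
  nlinarith [Real.sin_sq_add_cos_sq (π * z.re), sq_nonneg (Real.sinh (π * z.im))]
end

section
/- For any γ₋, γ₊ ∈ ℂ, the analytic order of vanishing of w at q = 0 equals 1 if and only if γ₋γ₊ ≠ i(γ₋ + γ₊); and if γ₋γ₊ = i(γ₋ + γ₊), then the analytic order of vanishing of w at q = 0 is at least 3. -/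
/-- The entire function whose zeros are the solutions of the transcendental
eigenvalue condition. -/
noncomputable def w (γm γp : ℂ) (q : ℂ) : ℂ :=
  ((↑Real.pi * q) ^ 2 + γm * γp) * Complex.sin (↑Real.pi * q)
    - Complex.I * (γm + γp) * (↑Real.pi * q) * Complex.cos (↑Real.pi * q)

lemma w_differentiable (γm γp : ℂ) : Differentiable ℂ (w γm γp) := by
  unfold w; fun_prop

/-- The analytic order of vanishing of `w γm γp` at `q`. -/
noncomputable def wOrder (γm γp q : ℂ) : ℕ∞ :=
  analyticOrderAt (w γm γp) q

namespace WOrderAux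

open Complex Filter Topology

/-- The `dslope` of an analytic function is analytic. -/
lemma analyticAt_dslope' {f : ℂ → ℂ} {z : ℂ} (hf : AnalyticAt ℂ f z) :
    AnalyticAt ℂ (dslope f z) z := by
  obtain ⟨p, hp⟩ := hf
  exact ⟨p.fslope, hp.has_fpower_series_dslope_fslope⟩

/-- If an analytic function and its first two derivatives vanish at `0`, its order is `≥ 3`. -/
lemma orderGe3 {f : ℂ → ℂ} (hf : AnalyticAt ℂ f 0) (h0 : f 0 = 0)
    (h1 : deriv f 0 = 0) (h2 : deriv (deriv f) 0 = 0) : 3 ≤ analyticOrderAt f 0 := by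
  by_contra hlt
  push_neg at hlt
  have hne : analyticOrderAt f 0 ≠ ⊤ := by
    intro h; rw [h] at hlt; exact absurd hlt (by simp)
  obtain ⟨n, hn⟩ := WithTop.ne_top_iff_exists.mp hne
  obtain ⟨g, hg, hg0, heq⟩ := (hf.analyticOrderAt_eq_natCast (n := n)).mp hn.symm
  have hn3 : n < 3 := by
    rw [← hn] at hlt
    have hlt' : ((n : ℕ) : ℕ∞) < ((3 : ℕ) : ℕ∞) := hlt
    exact_mod_cast hlt'
  have hgd : HasDerivAt g (deriv g 0) 0 := hg.differentiableAt.hasDerivAt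
  have heq' : f =ᶠ[𝓝 (0:ℂ)] fun z => (z - 0) ^ n • g z := heq
  interval_cases n
  · have := heq'.self_of_nhds
    simp only [sub_zero, pow_zero, one_smul] at this
    exact hg0 (this ▸ h0)
  · have hde : deriv f 0 = deriv (fun z => (z - 0) ^ 1 • g z) 0 := heq'.deriv_eq
    have hD : HasDerivAt (fun z : ℂ => (z - 0) ^ 1 • g z) (g 0) 0 := by
      have h' : HasDerivAt (fun z : ℂ => z * g z) (1 * g 0 + 0 * deriv g 0) 0 :=
        (hasDerivAt_id 0).mul hgd
      simp only [one_mul, zero_mul, add_zero] at h'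
      simpa [sub_zero, smul_eq_mul] using h'
    rw [hD.deriv, h1] at hde
    exact hg0 hde.symm
  · have hD : deriv f =ᶠ[𝓝 (0:ℂ)] deriv (fun z => (z - 0) ^ 2 • g z) := heq'.deriv
    have hD2 : deriv (fun z : ℂ => (z - 0) ^ 2 • g z)
        =ᶠ[𝓝 (0:ℂ)] fun z => 2 * z * g z + z ^ 2 * deriv g z := by
      filter_upwards [hg.eventually_analyticAt] with z hz
      have h' : HasDerivAt (fun z : ℂ => z ^ 2 * g z)
          (2 * z * g z + z ^ 2 * deriv g z) z := by
        have := (hasDerivAt_pow 2 z).mul hz.differentiableAt.hasDerivAt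
        refine this.congr_deriv ?_
        push_cast; ring
      have h'' : HasDerivAt (fun z : ℂ => (z - 0) ^ 2 • g z)
          (2 * z * g z + z ^ 2 * deriv g z) z := by
        simpa [sub_zero, smul_eq_mul] using h'
      exact h''.deriv
    have hfin : deriv f =ᶠ[𝓝 (0:ℂ)] fun z => 2 * z * g z + z ^ 2 * deriv g z :=
      hD.trans hD2
    have hde : deriv (deriv f) 0
        = deriv (fun z : ℂ => 2 * z * g z + z ^ 2 * deriv g z) 0 := hfin.deriv_eq
    have hgdd : DifferentiableAt ℂ (deriv g) 0 := by
      have h1' := hg.fderiv.differentiableAt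
      exact h1'.clm_apply (differentiableAt_const (1:ℂ))
    have hg'd : HasDerivAt (deriv g) (deriv (deriv g) 0) 0 := hgdd.hasDerivAt
    have hD3 : HasDerivAt (fun z : ℂ => 2 * z * g z + z ^ 2 * deriv g z) (2 * g 0) 0 := by
      have t1 : HasDerivAt (fun z : ℂ => 2 * z * g z)
          (2 * 1 * g 0 + 2 * 0 * deriv g 0) 0 :=
        (((hasDerivAt_id 0).const_mul 2)).mul hgd
      have t2 : HasDerivAt (fun z : ℂ => z ^ 2 * deriv g z)
          ((2:ℕ) * (0:ℂ) ^ 1 * deriv g 0 + 0 ^ 2 * deriv (deriv g) 0) 0 :=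
        (hasDerivAt_pow 2 0).mul hg'd
      have := t1.add t2
      refine this.congr_deriv ?_
      push_cast; ring
    rw [hD3.deriv, h2] at hde
    have h20 : (2:ℂ) * g 0 = 0 := hde.symm
    rcases mul_eq_zero.mp h20 with h | h
    · norm_num at h
    · exact hg0 h

/-- The derivative of `w`. -/
noncomputable def wd (γm γp : ℂ) (q : ℂ) : ℂ :=
  2 * ((↑Real.pi:ℂ) * q) * ↑Real.pi * Complex.sin (↑Real.pi * q)
    + ((↑Real.pi * q) ^ 2 + γm * γp) * (Complex.cos (↑Real.pi * q) * ↑Real.pi)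
    - (Complex.I * (γm + γp) * ↑Real.pi * Complex.cos (↑Real.pi * q)
       + Complex.I * (γm + γp) * (↑Real.pi * q) * (-Complex.sin (↑Real.pi * q) * ↑Real.pi))

lemma hq' (q : ℂ) : HasDerivAt (fun q : ℂ => (↑Real.pi : ℂ) * q) (↑Real.pi) q := by
  simpa using (hasDerivAt_id q).const_mul (↑Real.pi : ℂ)

lemma hsin' (q : ℂ) : HasDerivAt (fun q : ℂ => Complex.sin (↑Real.pi * q))
    (Complex.cos (↑Real.pi * q) * ↑Real.pi) q :=
  (Complex.hasDerivAt_sin _).comp q (hq' q)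

lemma hcos' (q : ℂ) : HasDerivAt (fun q : ℂ => Complex.cos (↑Real.pi * q))
    (-Complex.sin (↑Real.pi * q) * ↑Real.pi) q :=
  (Complex.hasDerivAt_cos _).comp q (hq' q)

lemma w_hasDerivAt (γm γp : ℂ) (q : ℂ) : HasDerivAt (w γm γp) (wd γm γp q) q := by
  have hpoly : HasDerivAt (fun q : ℂ => ((↑Real.pi:ℂ) * q) ^ 2 + γm * γp)
      (2 * ((↑Real.pi:ℂ) * q) * ↑Real.pi) q := by
    have := ((hq' q).fun_pow 2).add_const (γm * γp)
    refine this.congr_deriv ?_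
    push_cast; ring
  have hlin : HasDerivAt (fun q : ℂ => Complex.I * (γm + γp) * ((↑Real.pi:ℂ) * q))
      (Complex.I * (γm + γp) * ↑Real.pi) q := (hq' q).const_mul _
  have ht1 := hpoly.mul (hsin' q)
  have ht2 := hlin.mul (hcos' q)
  have h := ht1.sub ht2
  have hfe : w γm γp = fun q => (((↑Real.pi:ℂ) * q) ^ 2 + γm * γp) * Complex.sin (↑Real.pi * q)
      - Complex.I * (γm + γp) * ((↑Real.pi:ℂ) * q) * Complex.cos (↑Real.pi * q) := by
    funext z; simp only [w]
  rw [hfe]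
  exact h

lemma deriv_w (γm γp : ℂ) : deriv (w γm γp) = wd γm γp :=
  funext fun q => (w_hasDerivAt γm γp q).deriv

lemma deriv_w_zero (γm γp : ℂ) :
    deriv (w γm γp) 0 = ↑Real.pi * (γm * γp - Complex.I * (γm + γp)) := by
  rw [deriv_w]
  simp [wd]
  ring

lemma wd_hasDerivAt_zero (γm γp : ℂ) : HasDerivAt (wd γm γp) 0 0 := by
  have t1 : HasDerivAt (fun q : ℂ => 2 * ((↑Real.pi:ℂ) * q) * ↑Real.pi * Complex.sin (↑Real.pi * q))
      ((2 * ↑Real.pi * ↑Real.pi) * Complex.sin (↑Real.pi * 0) + (2 * ((↑Real.pi:ℂ) * 0) * ↑Real.pi) * (Complex.cos (↑Real.pi * 0) * ↑Real.pi)) 0 := by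
    have hl : HasDerivAt (fun q : ℂ => 2 * ((↑Real.pi:ℂ) * q) * ↑Real.pi)
        (2 * (↑Real.pi:ℂ) * ↑Real.pi) 0 := by
      have := ((hq' 0).const_mul (2:ℂ)).mul_const (↑Real.pi:ℂ)
      convert this using 1
    exact hl.mul (hsin' 0)
  have t2 : HasDerivAt (fun q : ℂ => (((↑Real.pi:ℂ) * q) ^ 2 + γm * γp) * (Complex.cos (↑Real.pi * q) * ↑Real.pi))
      ((2 * ((↑Real.pi:ℂ) * 0) * ↑Real.pi) * (Complex.cos (↑Real.pi * 0) * ↑Real.pi)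
        + (((↑Real.pi:ℂ) * 0) ^ 2 + γm * γp) * ((-Complex.sin (↑Real.pi * 0) * ↑Real.pi) * ↑Real.pi)) 0 := by
    have hpoly : HasDerivAt (fun q : ℂ => ((↑Real.pi:ℂ) * q) ^ 2 + γm * γp)
        (2 * ((↑Real.pi:ℂ) * 0) * ↑Real.pi) 0 := by
      have := ((hq' 0).fun_pow 2).add_const (γm * γp)
      refine this.congr_deriv ?_
      push_cast; ring
    exact hpoly.mul ((hcos' 0).mul_const _)
  have t3A : HasDerivAt (fun q : ℂ => Complex.I * (γm + γp) * ↑Real.pi * Complex.cos (↑Real.pi * q))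
      (Complex.I * (γm + γp) * ↑Real.pi * (-Complex.sin (↑Real.pi * 0) * ↑Real.pi)) 0 :=
    (hcos' 0).const_mul _
  have t3B : HasDerivAt (fun q : ℂ => Complex.I * (γm + γp) * ((↑Real.pi:ℂ) * q) * (-Complex.sin (↑Real.pi * q) * ↑Real.pi))
      ((Complex.I * (γm + γp) * ↑Real.pi) * (-Complex.sin (↑Real.pi * 0) * ↑Real.pi)
        + (Complex.I * (γm + γp) * ((↑Real.pi:ℂ) * 0)) * (-(Complex.cos (↑Real.pi * 0) * ↑Real.pi) * ↑Real.pi)) 0 := by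
    have hlin : HasDerivAt (fun q : ℂ => Complex.I * (γm + γp) * ((↑Real.pi:ℂ) * q))
        (Complex.I * (γm + γp) * ↑Real.pi) 0 := (hq' 0).const_mul _
    have hneg : HasDerivAt (fun q : ℂ => -Complex.sin (↑Real.pi * q) * ↑Real.pi)
        (-(Complex.cos (↑Real.pi * 0) * ↑Real.pi) * ↑Real.pi) 0 := ((hsin' 0).neg).mul_const _
    exact hlin.mul hneg
  have h := (t1.add t2).sub (t3A.add t3B)
  have hfe : wd γm γp = fun q => (2 * ((↑Real.pi:ℂ) * q) * ↑Real.pi * Complex.sin (↑Real.pi * q)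
      + (((↑Real.pi:ℂ) * q) ^ 2 + γm * γp) * (Complex.cos (↑Real.pi * q) * ↑Real.pi))
      - (Complex.I * (γm + γp) * ↑Real.pi * Complex.cos (↑Real.pi * q)
        + Complex.I * (γm + γp) * ((↑Real.pi:ℂ) * q) * (-Complex.sin (↑Real.pi * q) * ↑Real.pi)) := by
    funext z; simp only [wd]
  rw [hfe]
  refine h.congr_deriv ?_
  simp

lemma deriv2_w_zero (γm γp : ℂ) : deriv (deriv (w γm γp)) 0 = 0 := by
  rw [deriv_w]
  exact (wd_hasDerivAt_zero γm γp).deriv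

lemma w_order_one (γm γp : ℂ) (hne : γm * γp ≠ Complex.I * (γm + γp)) :
    analyticOrderAt (w γm γp) 0 = 1 := by
  set s : ℂ → ℂ := fun q => Complex.sin (↑Real.pi * q) with hs_def
  set g : ℂ → ℂ := fun q => ((↑Real.pi * q) ^ 2 + γm * γp) * dslope s 0 q
      - Complex.I * (γm + γp) * ↑Real.pi * Complex.cos (↑Real.pi * q) with hg_def
  have hsA : AnalyticAt ℂ s 0 := ((by fun_prop : Differentiable ℂ s)).analyticAt 0
  have hgA : AnalyticAt ℂ g 0 := by
    apply AnalyticAt.sub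
    · exact (((by fun_prop : Differentiable ℂ fun q : ℂ => (↑Real.pi * q) ^ 2 + γm * γp)).analyticAt 0).mul
        (analyticAt_dslope' hsA)
    · exact ((by fun_prop : Differentiable ℂ fun q : ℂ =>
        Complex.I * (γm + γp) * ↑Real.pi * Complex.cos (↑Real.pi * q))).analyticAt 0
  have hg0 : g 0 = ↑Real.pi * (γm * γp - Complex.I * (γm + γp)) := by
    have hder : deriv s 0 = ↑Real.pi := by
      have : deriv s 0 = Complex.cos (↑Real.pi * 0) * ↑Real.pi := (hsin' 0).deriv
      simpa using this
    simp [hg_def, hder]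
    ring
  have hgne : g 0 ≠ 0 := by
    rw [hg0]
    exact mul_ne_zero (Complex.ofReal_ne_zero.mpr Real.pi_ne_zero) (sub_ne_zero.mpr hne)
  have key : analyticOrderAt (w γm γp) 0 = (1 : ℕ) := by
    rw [((w_differentiable γm γp).analyticAt 0).analyticOrderAt_eq_natCast]
    refine ⟨g, hgA, hgne, Filter.Eventually.of_forall fun z => ?_⟩
    by_cases hz : z = 0
    · subst hz; simp [w, hg_def]
    · rw [hg_def]
      simp only [smul_eq_mul, pow_one, sub_zero]
      rw [dslope_of_ne _ hz, slope_def_field]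
      have : s 0 = 0 := by simp [hs_def]
      rw [this]
      simp only [hs_def, w]
      field_simp
      ring
  exact_mod_cast key

end WOrderAux

/-- The order of vanishing of `w` at `0` is `1` iff `γ₋γ₊ ≠ i(γ₋ + γ₊)`; and if
`γ₋γ₊ = i(γ₋ + γ₊)` then that order is at least `3`. -/
theorem w_order_at_zero (γm γp : ℂ) :
    (wOrder γm γp 0 = 1 ↔ γm * γp ≠ Complex.I * (γm + γp)) ∧
    (γm * γp = Complex.I * (γm + γp) → 3 ≤ wOrder γm γp 0) := by
  have horder : wOrder γm γp 0 = analyticOrderAt (w γm γp) 0 := rfl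
  have h3 : γm * γp = Complex.I * (γm + γp) →
      3 ≤ analyticOrderAt (w γm γp) 0 := by
    intro h
    apply WOrderAux.orderGe3 ((w_differentiable γm γp).analyticAt 0)
    · simp [w]
    · rw [WOrderAux.deriv_w_zero, h]
      ring
    · exact WOrderAux.deriv2_w_zero γm γp
  constructor
  · rw [horder]
    constructor
    · intro h1 heq
      have := h3 heq
      rw [h1] at this
      exact absurd this (by norm_num)
    · exact WOrderAux.w_order_one γm γp
  · rw [horder]
    exact h3
end

section
/- Let l > 0 be real and q, b, γ₋, γ₊ ∈ ℂ, and let φ : ℝ → ℂ be given by φ(x) = cos((π/l)·q·x + b). If φ satisfies the impedance boundary conditions −φ'(−l/2) + i·(γ₋/l)·φ(−l/2) = 0 at the left wall and φ'(l/2) + i·(γ₊/l)·φ(l/2) = 0 at the right wall, then ((πq)² + γ₋γ₊)·sin(πq) = i(γ₋ + γ₊)·(πq)·cos(πq). -/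
/-- If `φ(x) = cos((π/l)·q·x + b)` satisfies the impedance boundary conditions at
both walls of the interval `[−l/2, l/2]`, then the transcendental eigenvalue
condition `((πq)² + γ₋γ₊)·sin(πq) = i(γ₋ + γ₊)·(πq)·cos(πq)` holds. -/
theorem impedance_bc_implies_eigenvalue_condition
    (l : ℝ) (hl : 0 < l) (q b γm γp : ℂ)
    (φ : ℝ → ℂ) (hφ : ∀ x : ℝ, φ x = Complex.cos ((↑Real.pi / ↑l) * q * ↑x + b))
    (hleft : -deriv φ (-(l / 2)) + Complex.I * (γm / ↑l) * φ (-(l / 2)) = 0)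
    (hright : deriv φ (l / 2) + Complex.I * (γp / ↑l) * φ (l / 2) = 0) :
    ((↑Real.pi * q) ^ 2 + γm * γp) * Complex.sin (↑Real.pi * q) =
      Complex.I * (γm + γp) * (↑Real.pi * q) * Complex.cos (↑Real.pi * q) := by
  have hl0 : (l : ℂ) ≠ 0 := by exact_mod_cast hl.ne'
  have hφ' : φ = fun x : ℝ => Complex.cos ((↑Real.pi / ↑l) * q * ↑x + b) := funext hφ
  subst hφ'
  have hder : ∀ x : ℝ,
      deriv (fun x : ℝ => Complex.cos ((↑Real.pi / ↑l) * q * ↑x + b)) x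
        = -Complex.sin ((↑Real.pi / ↑l) * q * ↑x + b) * ((↑Real.pi / ↑l) * q) := by
    intro x
    have h1 : HasDerivAt (fun z : ℂ => Complex.cos ((↑Real.pi / ↑l) * q * z + b))
        (-Complex.sin ((↑Real.pi / ↑l) * q * ↑x + b) * ((↑Real.pi / ↑l) * q)) ↑x := by
      simpa using (((hasDerivAt_id ((x : ℂ))).const_mul ((↑Real.pi / ↑l) * q)).add_const b).ccos
    exact h1.comp_ofReal.deriv
  rw [hder] at hleft hright
  beta_reduce at hleft hright
  have harg1 : (↑Real.pi / ↑l) * q * ((-(l/2) : ℝ) : ℂ) + b = -(↑Real.pi * q / 2) + b := by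
    push_cast
    field_simp
    try ring
  have harg2 : (↑Real.pi / ↑l) * q * (((l/2) : ℝ) : ℂ) + b = (↑Real.pi * q / 2) + b := by
    push_cast
    field_simp
    try ring
  rw [harg1] at hleft
  rw [harg2] at hright
  set u : ℂ := -(↑Real.pi * q / 2) + b with hu
  set v : ℂ := (↑Real.pi * q / 2) + b with hv
  have hpq : (↑Real.pi : ℂ) * q = v - u := by rw [hu, hv]; ring
  rw [hpq, Complex.sin_sub, Complex.cos_sub]
  have e1 : (v - u) * Complex.sin u + Complex.I * γm * Complex.cos u = 0 := by
    rw [← hpq]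
    field_simp at hleft
    have h1 : ((↑Real.pi : ℂ) * q * Complex.sin u + Complex.I * γm * Complex.cos u) * ↑l = 0 := by
      linear_combination (↑l : ℂ) * hleft
    exact (mul_eq_zero.mp h1).resolve_right hl0
  have e2 : -(v - u) * Complex.sin v + Complex.I * γp * Complex.cos v = 0 := by
    rw [← hpq]
    field_simp at hright
    have h2 : (-((↑Real.pi : ℂ) * q) * Complex.sin v + Complex.I * γp * Complex.cos v) * ↑l = 0 := by
      linear_combination (↑l : ℂ) * hright
    exact (mul_eq_zero.mp h2).resolve_right hl0
  linear_combination (-((v - u) * Complex.cos v + Complex.I * γp * Complex.sin v)) * e1 +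
    (Complex.I * γm * Complex.sin u - (v - u) * Complex.cos u) * e2 +
    γm * γp * (Complex.sin v * Complex.cos u - Complex.cos v * Complex.sin u) * Complex.I_sq
end
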